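/- Let p be an odd prime, let i1, i2 ∈ {1,…,p−1} with i1 ≠ i2, and let n1, n2 ∈ {1,…,p−2} with n1 + n2 < p. Then C^{i1,i2}_0(n1,n2,p) − C^{i1,i2}_1(n1,n2,p) ≡ n1·C^{i1,i2}_1(n1−1,n2,p) + n2·C^{i1,i2}_1(n1,n2−1,p) − n1·C^{i1,i2}_0(n1−1,n2,p) − n2·C^{i1,i2}_0(n1,n2−1,p) (mod p); moreover, if p does not divide n1·i1 + n2·i2, this congruence is an equality of integers. -/

import Mathlib

open Finset

/-- `Ccount p i1 i2 n1 n2 i` is the number of sequences `(x_1,…,x_{n1+n2})` of pairwise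
distinct nonzero residues mod `p` such that
`i1·(x_1+…+x_{n1}) + i2·(x_{n1+1}+…+x_{n1+n2}) = i` in `ℤ/p`. -/
def Ccount (p : ℕ) [NeZero p] (i1 i2 n1 n2 : ℕ) (i : ZMod p) : ℕ :=
  ((Finset.univ : Finset (Fin (n1 + n2) → ZMod p)).filter
    (fun x : Fin (n1 + n2) → ZMod p => Function.Injective x ∧ (∀ k, x k ≠ 0) ∧
      (i1 : ZMod p) * (∑ k, if k.val < n1 then x k else 0) +
        (i2 : ZMod p) * (∑ k, if k.val < n1 then 0 else x k) = i)).card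

def wsum (p : ℕ) [NeZero p] (i1 i2 n1 : ℕ) {N : ℕ} (x : Fin N → ZMod p) : ZMod p :=
  (i1 : ZMod p) * (∑ k : Fin N, if (k : ℕ) < n1 then x k else 0) +
    (i2 : ZMod p) * (∑ k : Fin N, if (k : ℕ) < n1 then 0 else x k)

lemma Ccount_eq (p : ℕ) [NeZero p] (i1 i2 n1 n2 : ℕ) (i : ZMod p) :
    Ccount p i1 i2 n1 n2 i = ((Finset.univ : Finset (Fin (n1 + n2) → ZMod p)).filter
      (fun x => Function.Injective x ∧ (∀ k, x k ≠ 0) ∧ wsum p i1 i2 n1 x = i)).card := rfl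

lemma card_filter_lt (N n : ℕ) (hn : n ≤ N) :
    ((univ : Finset (Fin N)).filter (fun k : Fin N => (k : ℕ) < n)).card = n := by
  rw [← Fintype.card_fin n, ← Finset.card_univ]
  apply Finset.card_bij (fun (a : Fin N) ha => (⟨a, by simpa using ha⟩ : Fin n))
  · intros; exact mem_univ _
  · intro a1 h1 a2 h2 h; exact Fin.ext (by simpa using congrArg Fin.val h)
  · intro b _; exact ⟨⟨b, lt_of_lt_of_le b.2 hn⟩, by simp [b.2], rfl⟩

lemma card_filter_not_lt (N n : ℕ) (hn : n ≤ N) :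
    ((univ : Finset (Fin N)).filter (fun k : Fin N => ¬ (k : ℕ) < n)).card = N - n := by
  have h := Finset.card_filter_add_card_filter_not
    (s := (univ : Finset (Fin N))) (p := fun k : Fin N => (k : ℕ) < n)
  rw [card_filter_lt N n hn] at h
  simp only [Finset.card_univ, Fintype.card_fin] at h
  omega

lemma sum_ite_lt_const (p : ℕ) [NeZero p] (N n : ℕ) (hn : n ≤ N) (t : ZMod p) :
    (∑ k : Fin N, if (k : ℕ) < n then t else 0) = (n : ZMod p) * t := by
  rw [← Finset.sum_filter, Finset.sum_const, card_filter_lt N n hn, nsmul_eq_mul]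

lemma sum_ite_not_lt_const (p : ℕ) [NeZero p] (N n : ℕ) (hn : n ≤ N) (t : ZMod p) :
    (∑ k : Fin N, if (k : ℕ) < n then 0 else t) = ((N - n : ℕ) : ZMod p) * t := by
  have : ∀ k : Fin N, (if (k : ℕ) < n then (0 : ZMod p) else t)
      = (if ¬ (k : ℕ) < n then t else 0) := by intro k; split_ifs <;> simp_all
  rw [Finset.sum_congr rfl (fun k _ => this k), ← Finset.sum_filter, Finset.sum_const,
    card_filter_not_lt N n hn, nsmul_eq_mul]

lemma wsum_add (p : ℕ) [NeZero p] (i1 i2 n1 n2 : ℕ) (x : Fin (n1 + n2) → ZMod p) (t : ZMod p) :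
    wsum p i1 i2 n1 (fun k => x k + t)
      = wsum p i1 i2 n1 x + t * ((n1 : ZMod p) * i1 + (n2 : ZMod p) * i2) := by
  have hn : n1 ≤ n1 + n2 := Nat.le_add_right _ _
  have h1 : (∑ k : Fin (n1 + n2), if (k : ℕ) < n1 then x k + t else 0)
      = (∑ k : Fin (n1 + n2), if (k : ℕ) < n1 then x k else 0) + (n1 : ZMod p) * t := by
    have : ∀ k : Fin (n1 + n2), (if (k : ℕ) < n1 then x k + t else 0)
        = (if (k : ℕ) < n1 then x k else 0) + (if (k : ℕ) < n1 then t else 0) := by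
      intro k; split_ifs <;> simp
    rw [Finset.sum_congr rfl (fun k _ => this k), Finset.sum_add_distrib,
      sum_ite_lt_const p _ _ hn]
  have h2 : (∑ k : Fin (n1 + n2), if (k : ℕ) < n1 then 0 else x k + t)
      = (∑ k : Fin (n1 + n2), if (k : ℕ) < n1 then 0 else x k) + (n2 : ZMod p) * t := by
    have : ∀ k : Fin (n1 + n2), (if (k : ℕ) < n1 then 0 else x k + t)
        = (if (k : ℕ) < n1 then 0 else x k) + (if (k : ℕ) < n1 then 0 else t) := by
      intro k; split_ifs <;> simp
    rw [Finset.sum_congr rfl (fun k _ => this k), Finset.sum_add_distrib,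
      sum_ite_not_lt_const p _ _ hn, Nat.add_sub_cancel_left]
  simp only [wsum, h1, h2]; ring

lemma card_translate (p : ℕ) [NeZero p] (i1 i2 n1 n2 : ℕ) (i t : ZMod p) :
    ((univ : Finset (Fin (n1 + n2) → ZMod p)).filter
      (fun x => Function.Injective x ∧ wsum p i1 i2 n1 x = i)).card
    = ((univ : Finset (Fin (n1 + n2) → ZMod p)).filter
      (fun x => Function.Injective x ∧ wsum p i1 i2 n1 x
        = i + t * ((n1 : ZMod p) * i1 + (n2 : ZMod p) * i2))).card := by
  apply Finset.card_nbij' (fun x k => x k + t) (fun y k => y k - t)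
  · intro x hx
    simp only [Finset.mem_coe, mem_filter, mem_univ, true_and] at hx ⊢
    refine ⟨fun a b hab => hx.1 (by simpa using hab), ?_⟩
    rw [wsum_add p i1 i2 n1 n2 x t, hx.2]
  · intro y hy
    simp only [Finset.mem_coe, mem_filter, mem_univ, true_and] at hy ⊢
    refine ⟨fun a b hab => hy.1 (by simpa [sub_eq_iff_eq_add] using hab), ?_⟩
    have : (fun k => y k - t) = fun k => y k + (-t) := funext fun k => sub_eq_add_neg _ _
    rw [this, wsum_add p i1 i2 n1 n2 y (-t), hy.2]; ring
  · intro x _; funext k; simp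
  · intro y _; funext k; simp

lemma card_fiber_translate (p : ℕ) [NeZero p] (i1 i2 n1 n2 : ℕ)
    (hM : (n1 : ZMod p) * i1 + (n2 : ZMod p) * i2 = 0) (i t : ZMod p) (k0 : Fin (n1 + n2)) :
    ((univ : Finset (Fin (n1 + n2) → ZMod p)).filter
      (fun x => (Function.Injective x ∧ wsum p i1 i2 n1 x = i) ∧ x k0 = 0)).card
    = ((univ : Finset (Fin (n1 + n2) → ZMod p)).filter
      (fun x => (Function.Injective x ∧ wsum p i1 i2 n1 x = i) ∧ x k0 = t)).card := by
  apply Finset.card_nbij' (fun x k => x k + t) (fun y k => y k - t)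
  · intro x hx
    simp only [Finset.mem_coe, mem_filter, mem_univ, true_and] at hx ⊢
    refine ⟨⟨fun a b hab => hx.1.1 (by simpa using hab), ?_⟩, by rw [hx.2, zero_add]⟩
    rw [wsum_add p i1 i2 n1 n2 x t, hx.1.2, hM, mul_zero, add_zero]
  · intro y hy
    simp only [Finset.mem_coe, mem_filter, mem_univ, true_and] at hy ⊢
    refine ⟨⟨fun a b hab => hy.1.1 (by simpa [sub_eq_iff_eq_add] using hab), ?_⟩,
      by rw [hy.2, sub_self]⟩
    have : (fun k => y k - t) = fun k => y k + (-t) := funext fun k => sub_eq_add_neg _ _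
    rw [this, wsum_add p i1 i2 n1 n2 y (-t), hy.1.2, hM, mul_zero, add_zero]
  · intro x _; funext k; simp
  · intro y _; funext k; simp

lemma dvd_card_D (p : ℕ) [NeZero p] (i1 i2 n1 n2 : ℕ) (hpos : 0 < n1 + n2)
    (hM : (n1 : ZMod p) * i1 + (n2 : ZMod p) * i2 = 0) (i : ZMod p) :
    p ∣ ((univ : Finset (Fin (n1 + n2) → ZMod p)).filter
      (fun x => Function.Injective x ∧ wsum p i1 i2 n1 x = i)).card := by
  classical
  set k0 : Fin (n1 + n2) := ⟨0, hpos⟩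
  rw [Finset.card_eq_sum_card_fiberwise
    (f := fun x : Fin (n1 + n2) → ZMod p => x k0) (t := univ) (fun x _ => mem_univ _)]
  have hfib : ∀ t : ZMod p,
      ((filter (fun x => Function.Injective x ∧ wsum p i1 i2 n1 x = i)
        (univ : Finset (Fin (n1 + n2) → ZMod p))).filter (fun x => x k0 = t)).card
      = ((univ : Finset (Fin (n1 + n2) → ZMod p)).filter
        (fun x => (Function.Injective x ∧ wsum p i1 i2 n1 x = i) ∧ x k0 = 0)).card := by
    intro t
    rw [Finset.filter_filter]
    exact (card_fiber_translate p i1 i2 n1 n2 hM i t k0).symm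
  rw [Finset.sum_congr rfl (fun t _ => hfib t), Finset.sum_const, Finset.card_univ,
    ZMod.card]
  exact Dvd.intro _ rfl

lemma decomp (p : ℕ) [NeZero p] (i1 i2 n1 n2 : ℕ) (i : ZMod p) :
    ((univ : Finset (Fin (n1 + n2) → ZMod p)).filter
      (fun x => Function.Injective x ∧ wsum p i1 i2 n1 x = i)).card
    = Ccount p i1 i2 n1 n2 i + ∑ k : Fin (n1 + n2),
        ((univ : Finset (Fin (n1 + n2) → ZMod p)).filter
          (fun x => (Function.Injective x ∧ wsum p i1 i2 n1 x = i) ∧ x k = 0)).card := by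
  classical
  rw [Ccount_eq]
  have hsplit := Finset.card_filter_add_card_filter_not
    (s := (univ : Finset (Fin (n1 + n2) → ZMod p)).filter
      (fun x => Function.Injective x ∧ wsum p i1 i2 n1 x = i))
    (p := fun x => ∀ k, x k ≠ 0)
  have h1 : ((univ : Finset (Fin (n1 + n2) → ZMod p)).filter
      (fun x => Function.Injective x ∧ wsum p i1 i2 n1 x = i)).filter (fun x => ∀ k, x k ≠ 0)
      = (univ : Finset (Fin (n1 + n2) → ZMod p)).filter
        (fun x => Function.Injective x ∧ (∀ k, x k ≠ 0) ∧ wsum p i1 i2 n1 x = i) := by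
    rw [Finset.filter_filter]; apply Finset.filter_congr; intro x _; tauto
  have h2 : ((univ : Finset (Fin (n1 + n2) → ZMod p)).filter
      (fun x => Function.Injective x ∧ wsum p i1 i2 n1 x = i)).filter
        (fun x => ¬ ∀ k, x k ≠ 0)
      = (univ : Finset (Fin (n1 + n2))).biUnion (fun k =>
          (univ : Finset (Fin (n1 + n2) → ZMod p)).filter
            (fun x => (Function.Injective x ∧ wsum p i1 i2 n1 x = i) ∧ x k = 0)) := by
    ext x
    simp only [Finset.mem_filter, Finset.mem_biUnion, Finset.mem_univ, true_and, not_forall,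
      not_not]
    tauto
  have h3 : ((univ : Finset (Fin (n1 + n2))).biUnion (fun k =>
      (univ : Finset (Fin (n1 + n2) → ZMod p)).filter
        (fun x => (Function.Injective x ∧ wsum p i1 i2 n1 x = i) ∧ x k = 0))).card
      = ∑ k : Fin (n1 + n2), ((univ : Finset (Fin (n1 + n2) → ZMod p)).filter
        (fun x => (Function.Injective x ∧ wsum p i1 i2 n1 x = i) ∧ x k = 0)).card := by
    refine Finset.card_biUnion fun k _ k' _ hkk' => ?_
    rw [Function.onFun, Finset.disjoint_left]
    intro x hx hx'
    simp only [Finset.mem_filter] at hx hx'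
    exact hkk' (hx.2.1.1 (hx.2.2.trans hx'.2.2.symm))
  rw [h1, h2, h3] at hsplit
  exact hsplit.symm

def emb {N M : ℕ} (hNM : N = M + 1) (k : Fin N) : Fin M → Fin N :=
  fun j => ⟨if (j : ℕ) < (k : ℕ) then (j : ℕ) else (j : ℕ) + 1,
    by have := j.isLt; have := k.isLt; split <;> omega⟩

lemma emb_val {N M : ℕ} (hNM : N = M + 1) (k : Fin N) (j : Fin M) :
    (emb hNM k j : ℕ) = if (j : ℕ) < (k : ℕ) then (j : ℕ) else (j : ℕ) + 1 := rfl

lemma emb_ne {N M : ℕ} (hNM : N = M + 1) (k : Fin N) (j : Fin M) : emb hNM k j ≠ k := by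
  intro h
  have hv := congrArg Fin.val h
  rw [emb_val] at hv
  split_ifs at hv <;> omega

lemma emb_inj {N M : ℕ} (hNM : N = M + 1) (k : Fin N) :
    Function.Injective (emb hNM k) := by
  intro a b hab
  have hv := congrArg Fin.val hab
  rw [emb_val, emb_val] at hv
  apply Fin.ext
  split_ifs at hv <;> omega

def extZero (p : ℕ) [NeZero p] {N M : ℕ} (hNM : N = M + 1) (hM0 : 0 < M) (k : Fin N)
    (y : Fin M → ZMod p) : Fin N → ZMod p :=
  fun t => if (t : ℕ) = (k : ℕ) then 0 else
    y ⟨if (t : ℕ) < (k : ℕ) then (t : ℕ) else (t : ℕ) - 1,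
      by have := t.isLt; have := k.isLt; split <;> omega⟩

lemma extZero_emb (p : ℕ) [NeZero p] {N M : ℕ} (hNM : N = M + 1) (hM0 : 0 < M) (k : Fin N)
    (y : Fin M → ZMod p) (j : Fin M) : extZero p hNM hM0 k y (emb hNM k j) = y j := by
  unfold extZero
  rw [if_neg (fun h => emb_ne hNM k j (Fin.ext h))]
  congr 1
  apply Fin.ext
  simp only [emb_val]
  have := j.isLt; have := k.isLt
  split_ifs <;> omega

lemma extZero_self (p : ℕ) [NeZero p] {N M : ℕ} (hNM : N = M + 1) (hM0 : 0 < M) (k : Fin N)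
    (y : Fin M → ZMod p) : extZero p hNM hM0 k y k = 0 := by
  unfold extZero; rw [if_pos rfl]

lemma sum_split (p : ℕ) [NeZero p] {N M : ℕ} (hNM : N = M + 1) (hM0 : 0 < M) (k : Fin N)
    (f : Fin N → ZMod p) : ∑ t, f t = f k + ∑ j, f (emb hNM k j) := by
  rw [← Finset.add_sum_erase _ f (mem_univ k)]
  congr 1
  refine Finset.sum_bij'
    (fun (t : Fin N) (ht : t ∈ (univ : Finset (Fin N)).erase k) =>
      (⟨if (t : ℕ) < (k : ℕ) then (t : ℕ) else (t : ℕ) - 1,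
        by have h1 := t.isLt; have h2 := k.isLt
           have h3 : (t:ℕ) ≠ (k:ℕ) := Fin.val_ne_of_ne (Finset.mem_erase.mp ht).1
           split <;> omega⟩ : Fin M))
    (fun (b : Fin M) _ => emb hNM k b) ?hi ?hj ?left ?right ?h
  case hi => intro a ha; exact mem_univ _
  case hj =>
    intro b hb
    rw [Finset.mem_erase]
    exact ⟨emb_ne hNM k b, mem_univ _⟩
  case left =>
    intro a ha
    have ha' : (a : ℕ) ≠ (k : ℕ) := Fin.val_ne_of_ne (Finset.mem_erase.mp ha).1
    have h1 := a.isLt; have h2 := k.isLt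
    simp only [emb, Fin.ext_iff]
    split_ifs <;> simp_all <;> omega
  case right =>
    intro b hb
    have h1 := b.isLt; have h2 := k.isLt
    simp only [emb, Fin.ext_iff]
    split_ifs <;> simp_all <;> omega
  case h =>
    intro a ha
    have ha' : (a : ℕ) ≠ (k : ℕ) := Fin.val_ne_of_ne (Finset.mem_erase.mp ha).1
    have ha' : (a : ℕ) ≠ (k : ℕ) := Fin.val_ne_of_ne (Finset.mem_erase.mp ha).1
    have h1 := a.isLt; have h2 := k.isLt
    congr 1
    simp only [emb, Fin.ext_iff]
    split_ifs <;> simp_all <;> omega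

lemma card_zero_fiber (p : ℕ) [NeZero p] (i1 i2 : ℕ) {N M n m : ℕ} (hNM : N = M + 1)
    (hM0 : 0 < M) (k : Fin N) (i : ZMod p)
    (hcond : ∀ j : Fin M, ((emb hNM k j : ℕ) < n ↔ (j : ℕ) < m)) :
    ((univ : Finset (Fin N → ZMod p)).filter
      (fun x => (Function.Injective x ∧ wsum p i1 i2 n x = i) ∧ x k = 0)).card
    = ((univ : Finset (Fin M → ZMod p)).filter
      (fun y => Function.Injective y ∧ (∀ j, y j ≠ 0) ∧ wsum p i1 i2 m y = i)).card := by
  classical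
  -- weighted sums agree after removing the zero coordinate
  have hws : ∀ x : Fin N → ZMod p, x k = 0 →
      wsum p i1 i2 n x = wsum p i1 i2 m (fun j => x (emb hNM k j)) := by
    intro x hxk
    unfold wsum
    rw [sum_split p hNM hM0 k (fun t => if (t : ℕ) < n then x t else 0),
      sum_split p hNM hM0 k (fun t => if (t : ℕ) < n then 0 else x t)]
    have e1 : ∀ j : Fin M, (if ((emb hNM k j : ℕ) < n) then x (emb hNM k j) else 0)
        = (if (j : ℕ) < m then x (emb hNM k j) else 0) := fun j => if_congr (hcond j) rfl rfl
    have e2 : ∀ j : Fin M, (if ((emb hNM k j : ℕ) < n) then 0 else x (emb hNM k j))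
        = (if (j : ℕ) < m then 0 else x (emb hNM k j)) := fun j => if_congr (hcond j) rfl rfl
    rw [Finset.sum_congr rfl (fun j _ => e1 j), Finset.sum_congr rfl (fun j _ => e2 j), hxk]
    simp only [ite_self, zero_add]
  apply Finset.card_nbij' (fun x (j : Fin M) => x (emb hNM k j)) (extZero p hNM hM0 k)
  · intro x hx
    simp only [Finset.mem_coe, mem_filter, mem_univ, true_and] at hx ⊢
    obtain ⟨⟨hinj, hw⟩, hzk⟩ := hx
    refine ⟨fun a b hab => emb_inj hNM k (hinj hab), fun j hj => ?_, ?_⟩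
    · exact emb_ne hNM k j (hinj (hj.trans hzk.symm))
    · rw [← hws x hzk, hw]
  · intro y hy
    simp only [Finset.mem_coe, mem_filter, mem_univ, true_and] at hy ⊢
    obtain ⟨hinj, hnz, hw⟩ := hy
    have hself := extZero_self p hNM hM0 k y
    refine ⟨⟨?_, ?_⟩, hself⟩
    · intro a b hab
      by_cases ha : (a : ℕ) = (k : ℕ) <;> by_cases hb : (b : ℕ) = (k : ℕ)
      · exact Fin.ext (ha.trans hb.symm)
      · exfalso
        rw [extZero, if_pos ha, extZero, if_neg hb] at hab
        exact hnz _ hab.symm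
      · exfalso
        rw [extZero, if_neg ha, extZero, if_pos hb] at hab
        exact hnz _ hab
      · simp only [extZero] at hab
        rw [if_neg ha, if_neg hb] at hab
        have := congrArg Fin.val (hinj hab)
        simp only [] at this
        apply Fin.ext
        have h1 := a.isLt; have h2 := k.isLt; have h3 := b.isLt
        split_ifs at this <;> omega
    · rw [hws (extZero p hNM hM0 k y) hself]
      have : (fun j => extZero p hNM hM0 k y (emb hNM k j)) = y :=
        funext fun j => extZero_emb p hNM hM0 k y j
      rw [this, hw]
  · intro x hx
    simp only [Finset.mem_coe, mem_filter, mem_univ, true_and] at hx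
    funext t
    by_cases ht : (t : ℕ) = (k : ℕ)
    · rw [extZero, if_pos ht]
      have : t = k := Fin.ext ht
      rw [this, hx.2]
    · rw [extZero, if_neg ht]
      congr 1
      have h1 := t.isLt; have h2 := k.isLt
      simp only [emb, Fin.ext_iff]
      split_ifs <;> congr 1 <;> apply Fin.ext <;> simp only [Fin.val_mk] <;> omega
  · intro y hy
    funext j
    exact extZero_emb p hNM hM0 k y j

/-- "colored" Pascal's equation. -/
theorem rarefaction_stmt11 (p : ℕ) [NeZero p] (hp : p.Prime) (hodd : Odd p)
    (i1 i2 : ℕ) (hi1 : 1 ≤ i1 ∧ i1 ≤ p - 1) (hi2 : 1 ≤ i2 ∧ i2 ≤ p - 1) (hne : i1 ≠ i2)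
    (n1 n2 : ℕ) (hn1 : 1 ≤ n1 ∧ n1 ≤ p - 2) (hn2 : 1 ≤ n2 ∧ n2 ≤ p - 2)
    (hsum : n1 + n2 < p) :
    ((Ccount p i1 i2 n1 n2 0 : ℤ) - (Ccount p i1 i2 n1 n2 1 : ℤ) ≡
      (n1 : ℤ) * (Ccount p i1 i2 (n1 - 1) n2 1 : ℤ) +
        (n2 : ℤ) * (Ccount p i1 i2 n1 (n2 - 1) 1 : ℤ) -
        (n1 : ℤ) * (Ccount p i1 i2 (n1 - 1) n2 0 : ℤ) -
        (n2 : ℤ) * (Ccount p i1 i2 n1 (n2 - 1) 0 : ℤ) [ZMOD (p : ℤ)]) ∧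
    (¬ (p ∣ n1 * i1 + n2 * i2) →
      (Ccount p i1 i2 n1 n2 0 : ℤ) - (Ccount p i1 i2 n1 n2 1 : ℤ) =
        (n1 : ℤ) * (Ccount p i1 i2 (n1 - 1) n2 1 : ℤ) +
          (n2 : ℤ) * (Ccount p i1 i2 n1 (n2 - 1) 1 : ℤ) -
          (n1 : ℤ) * (Ccount p i1 i2 (n1 - 1) n2 0 : ℤ) -
          (n2 : ℤ) * (Ccount p i1 i2 n1 (n2 - 1) 0 : ℤ)) := by
  classical
  obtain ⟨a, rfl⟩ : ∃ a, n1 = a + 1 := ⟨n1 - 1, by omega⟩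
  obtain ⟨b, rfl⟩ : ∃ b, n2 = b + 1 := ⟨n2 - 1, by omega⟩
  simp only [Nat.add_sub_cancel]
  -- D i = number of injective sequences (zeros allowed) with weighted sum i
  set D : ZMod p → ℕ := fun i =>
    ((univ : Finset (Fin ((a+1) + (b+1)) → ZMod p)).filter
      (fun x => Function.Injective x ∧ wsum p i1 i2 (a+1) x = i)).card with hDdef
  have hZ : ∀ (i : ZMod p) (k : Fin ((a+1) + (b+1))),
      ((univ : Finset (Fin ((a+1) + (b+1)) → ZMod p)).filter
        (fun x => (Function.Injective x ∧ wsum p i1 i2 (a+1) x = i) ∧ x k = 0)).card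
      = if (k : ℕ) < a + 1 then Ccount p i1 i2 a (b+1) i else Ccount p i1 i2 (a+1) b i := by
    intro i k
    split_ifs with hk
    · rw [Ccount_eq]
      exact card_zero_fiber p i1 i2 (by omega : (a+1)+(b+1) = (a+(b+1)) + 1) (by omega) k i
        (by intro j; rw [emb_val]; have := j.isLt; split_ifs <;> omega)
    · rw [Ccount_eq]
      exact card_zero_fiber p i1 i2 (by omega : (a+1)+(b+1) = ((a+1)+b) + 1) (by omega) k i
        (by intro j; rw [emb_val]; have := j.isLt; split_ifs <;> omega)
  have hD : ∀ i : ZMod p, D i = Ccount p i1 i2 (a+1) (b+1) i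
      + ((a+1) * Ccount p i1 i2 a (b+1) i + (b+1) * Ccount p i1 i2 (a+1) b i) := by
    intro i
    simp only [hDdef]
    rw [decomp p i1 i2 (a+1) (b+1) i]
    congr 1
    rw [Finset.sum_congr rfl (fun k _ => hZ i k), Finset.sum_ite, Finset.sum_const,
      Finset.sum_const, card_filter_lt _ _ (by omega), card_filter_not_lt _ _ (by omega)]
    have hb1 : (a+1) + (b+1) - (a+1) = b + 1 := by omega
    rw [hb1, smul_eq_mul, smul_eq_mul]
  have hD0 := hD 0
  have hD1 := hD 1
  by_cases hdvd : p ∣ (a+1) * i1 + (b+1) * i2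
  · -- p divides each D i
    have hM : ((a+1 : ℕ) : ZMod p) * (i1 : ZMod p) + ((b+1 : ℕ) : ZMod p) * (i2 : ZMod p)
        = 0 := by
      have := (ZMod.natCast_eq_zero_iff ((a+1) * i1 + (b+1) * i2) p).mpr hdvd
      push_cast at this ⊢
      linear_combination this
    have hp0 : p ∣ D 0 := dvd_card_D p i1 i2 (a+1) (b+1) (by omega) hM 0
    have hp1 : p ∣ D 1 := dvd_card_D p i1 i2 (a+1) (b+1) (by omega) hM 1
    constructor
    · rw [Int.modEq_iff_dvd]
      have key : ((a:ℤ)+1) * (Ccount p i1 i2 a (b+1) 1 : ℤ) +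
            ((b:ℤ)+1) * (Ccount p i1 i2 (a+1) b 1 : ℤ) -
            ((a:ℤ)+1) * (Ccount p i1 i2 a (b+1) 0 : ℤ) -
            ((b:ℤ)+1) * (Ccount p i1 i2 (a+1) b 0 : ℤ)
          - ((Ccount p i1 i2 (a+1) (b+1) 0 : ℤ) - (Ccount p i1 i2 (a+1) (b+1) 1 : ℤ))
          = (D 1 : ℤ) - (D 0 : ℤ) := by
        have e0 : (D 0 : ℤ) = (Ccount p i1 i2 (a+1) (b+1) 0 : ℤ)
            + (((a:ℤ)+1) * (Ccount p i1 i2 a (b+1) 0 : ℤ)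
              + ((b:ℤ)+1) * (Ccount p i1 i2 (a+1) b 0 : ℤ)) := by exact_mod_cast hD0
        have e1 : (D 1 : ℤ) = (Ccount p i1 i2 (a+1) (b+1) 1 : ℤ)
            + (((a:ℤ)+1) * (Ccount p i1 i2 a (b+1) 1 : ℤ)
              + ((b:ℤ)+1) * (Ccount p i1 i2 (a+1) b 1 : ℤ)) := by exact_mod_cast hD1
        rw [e0, e1]; ring
      push_cast
      rw [key]
      exact dvd_sub (Int.natCast_dvd_natCast.mpr hp1) (Int.natCast_dvd_natCast.mpr hp0)
    · intro h; exact absurd hdvd h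
  · -- p does not divide the weight: D 0 = D 1 exactly
    haveI : Fact p.Prime := ⟨hp⟩
    have hMne : ((a+1 : ℕ) : ZMod p) * (i1 : ZMod p) + ((b+1 : ℕ) : ZMod p) * (i2 : ZMod p)
        ≠ 0 := by
      intro h
      apply hdvd
      rw [← ZMod.natCast_eq_zero_iff]
      push_cast at h ⊢
      linear_combination h
    have htr := card_translate p i1 i2 (a+1) (b+1) 0
      (((a+1 : ℕ) : ZMod p) * (i1 : ZMod p) + ((b+1 : ℕ) : ZMod p) * (i2 : ZMod p))⁻¹
    rw [zero_add, inv_mul_cancel₀ hMne] at htr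
    have hD01 : D 0 = D 1 := htr
    have heq : (Ccount p i1 i2 (a+1) (b+1) 0 : ℤ) - (Ccount p i1 i2 (a+1) (b+1) 1 : ℤ) =
        ((a+1 : ℕ) : ℤ) * (Ccount p i1 i2 a (b+1) 1 : ℤ) +
          ((b+1 : ℕ) : ℤ) * (Ccount p i1 i2 (a+1) b 1 : ℤ) -
          ((a+1 : ℕ) : ℤ) * (Ccount p i1 i2 a (b+1) 0 : ℤ) -
          ((b+1 : ℕ) : ℤ) * (Ccount p i1 i2 (a+1) b 0 : ℤ) := by
      have e0 : (D 0 : ℤ) = (Ccount p i1 i2 (a+1) (b+1) 0 : ℤ)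
          + (((a:ℤ)+1) * (Ccount p i1 i2 a (b+1) 0 : ℤ)
            + ((b:ℤ)+1) * (Ccount p i1 i2 (a+1) b 0 : ℤ)) := by exact_mod_cast hD0
      have e1 : (D 1 : ℤ) = (Ccount p i1 i2 (a+1) (b+1) 1 : ℤ)
          + (((a:ℤ)+1) * (Ccount p i1 i2 a (b+1) 1 : ℤ)
            + ((b:ℤ)+1) * (Ccount p i1 i2 (a+1) b 1 : ℤ)) := by exact_mod_cast hD1
      have e01 : (D 0 : ℤ) = (D 1 : ℤ) := by exact_mod_cast hD01
      push_cast
      linarith [e0, e1, e01]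
    constructor
    · push_cast at heq ⊢
      rw [heq]
    · intro _
      push_cast at heq ⊢
      exact heq
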